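/- Euler's second identity: for complex q, z with |q| < 1, ∑_{n=0}^∞ q^{n(n-1)/2} z^n / (q;q)_n = (-z;q)_∞, where the series converges for all z. -/

import Mathlib

/-- Finite q-Pochhammer symbol: (a;q)_n = ∏_{k=0}^{n-1} (1 - a q^k). -/
noncomputable def qp (a q : ℂ) (n : ℕ) : ℂ := ∏ k ∈ Finset.range n, (1 - a * q ^ k)

/-- Infinite q-Pochhammer symbol: (a;q)_∞ = ∏_{k=0}^∞ (1 - a q^k). -/
noncomputable def qpInf (a q : ℂ) : ℂ := ∏' k : ℕ, (1 - a * q ^ k)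

open Finset Filter Complex Topology


lemma qp_succ (a q : ℂ) (n : ℕ) : qp a q (n + 1) = qp a q n * (1 - a * q ^ n) :=
  Finset.prod_range_succ _ _

lemma one_sub_ge {x b : ℝ} (hx0 : 0 ≤ x) (hxb : x ≤ b) (hb : b < 1) :
    Real.exp (-(x / (1 - b))) ≤ 1 - x := by
  have hb0 : 0 < 1 - b := by linarith
  have hx1 : 0 < 1 - x := by linarith
  rw [Real.exp_neg]
  rw [inv_le_iff_one_le_mul₀ (Real.exp_pos _)]
  calc (1 : ℝ) = (1 - x) * (1 + x / (1 - x)) := by field_simp; ring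
    _ ≤ (1 - x) * (1 + x / (1 - b)) := by
        have : x / (1 - x) ≤ x / (1 - b) := by
          apply div_le_div_of_nonneg_left hx0 hb0; linarith
        nlinarith
    _ ≤ (1 - x) * Real.exp (x / (1 - b)) := by
        have := Real.add_one_le_exp (x / (1 - b))
        nlinarith [Real.exp_pos (x / (1 - b))]

lemma sum_pow_le {r : ℝ} (h0 : 0 ≤ r) (h1 : r < 1) (n : ℕ) :
    ∑ k ∈ range n, r ^ k ≤ (1 - r)⁻¹ := by
  have := Summable.sum_le_tsum (range n) (fun k _ => pow_nonneg h0 k) (summable_geometric_of_lt_one h0 h1)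
  rwa [tsum_geometric_of_lt_one h0 h1] at this

lemma qp_norm_le (a q : ℂ) (hq : ‖q‖ < 1) (n : ℕ) :
    ‖qp a q n‖ ≤ Real.exp (‖a‖ * (1 - ‖q‖)⁻¹) := by
  have h0 : (0:ℝ) ≤ ‖q‖ := norm_nonneg q
  rw [qp, norm_prod]
  calc ∏ k ∈ range n, ‖1 - a * q ^ k‖
      ≤ ∏ k ∈ range n, Real.exp (‖a‖ * ‖q‖ ^ k) := by
        apply Finset.prod_le_prod (fun k _ => norm_nonneg _)
        intro k _
        calc ‖1 - a * q ^ k‖ ≤ ‖(1:ℂ)‖ + ‖a * q ^ k‖ := norm_sub_le _ _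
          _ = 1 + ‖a‖ * ‖q‖ ^ k := by simp [norm_mul, norm_pow]
          _ ≤ Real.exp (‖a‖ * ‖q‖ ^ k) := by
              have := Real.add_one_le_exp (‖a‖ * ‖q‖ ^ k); linarith
    _ = Real.exp (∑ k ∈ range n, ‖a‖ * ‖q‖ ^ k) := (Real.exp_sum _ _).symm
    _ ≤ Real.exp (‖a‖ * (1 - ‖q‖)⁻¹) := by
        apply Real.exp_le_exp.2
        rw [← mul_sum]
        exact mul_le_mul_of_nonneg_left (sum_pow_le h0 hq n) (norm_nonneg a)

lemma qp_q_norm_ge (q : ℂ) (hq : ‖q‖ < 1) (n : ℕ) :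
    Real.exp (-(‖q‖ * (1 - ‖q‖)⁻¹ * (1 - ‖q‖)⁻¹)) ≤ ‖qp q q n‖ := by
  have h0 : (0:ℝ) ≤ ‖q‖ := norm_nonneg q
  have hb0 : (0:ℝ) < 1 - ‖q‖ := by linarith
  rw [qp, norm_prod]
  calc Real.exp (-(‖q‖ * (1 - ‖q‖)⁻¹ * (1 - ‖q‖)⁻¹))
      ≤ Real.exp (-∑ k ∈ range n, ‖q‖ ^ (k + 1) / (1 - ‖q‖)) := by
        apply Real.exp_le_exp.2
        rw [neg_le_neg_iff]
        calc ∑ k ∈ range n, ‖q‖ ^ (k + 1) / (1 - ‖q‖)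
            = (∑ k ∈ range n, ‖q‖ ^ k) * (‖q‖ * (1 - ‖q‖)⁻¹) := by
              rw [sum_mul]; congr 1; ext k; rw [pow_succ]; ring
          _ ≤ (1 - ‖q‖)⁻¹ * (‖q‖ * (1 - ‖q‖)⁻¹) := by
              apply mul_le_mul_of_nonneg_right (sum_pow_le h0 hq n)
              positivity
          _ = ‖q‖ * (1 - ‖q‖)⁻¹ * (1 - ‖q‖)⁻¹ := by ring
    _ = ∏ k ∈ range n, Real.exp (-(‖q‖ ^ (k + 1) / (1 - ‖q‖))) := by
        rw [← Real.exp_sum]; congr 1; rw [← Finset.sum_neg_distrib]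
    _ ≤ ∏ k ∈ range n, ‖1 - q * q ^ k‖ := by
        apply Finset.prod_le_prod (fun k _ => (Real.exp_pos _).le)
        intro k _
        have hle : ‖q‖ ^ (k + 1) ≤ ‖q‖ := by
          calc ‖q‖ ^ (k + 1) = ‖q‖ * ‖q‖ ^ k := by rw [pow_succ]; ring
            _ ≤ ‖q‖ * 1 := by
                apply mul_le_mul_of_nonneg_left _ h0
                exact pow_le_one₀ h0 hq.le
            _ = ‖q‖ := mul_one _
        calc Real.exp (-(‖q‖ ^ (k + 1) / (1 - ‖q‖)))
            ≤ 1 - ‖q‖ ^ (k + 1) := one_sub_ge (pow_nonneg h0 _) hle hq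
          _ = 1 - ‖q * q ^ k‖ := by rw [norm_mul, norm_pow, ← pow_succ']
          _ ≤ ‖1 - q * q ^ k‖ := by
              have := norm_sub_norm_le (1 : ℂ) (q * q ^ k)
              simpa using this

lemma qp_q_ne_zero (q : ℂ) (hq : ‖q‖ < 1) (n : ℕ) : qp q q n ≠ 0 := by
  have h := qp_q_norm_ge q hq n
  intro h0
  rw [h0, norm_zero] at h
  exact absurd h (not_le.2 (Real.exp_pos _))


noncomputable def qc (q : ℂ) (N n : ℕ) : ℂ :=
  q ^ (n * (n - 1) / 2) * qp q q N / (qp q q n * qp q q (N - n))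

lemma tri_succ (n : ℕ) : (n + 1) * (n + 1 - 1) / 2 = n * (n - 1) / 2 + n := by
  rcases n with _ | m
  · simp
  · simp only [Nat.add_sub_cancel]
    have : (m + 1 + 1) * (m + 1) = (m + 1) * m + 2 * (m + 1) := by ring
    omega

lemma qc_zero (q : ℂ) (hq : ‖q‖ < 1) (N : ℕ) : qc q N 0 = 1 := by
  simp [qc, qp, div_self (by simpa [qp] using qp_q_ne_zero q hq N)]

lemma qc_pascal (q : ℂ) (hq : ‖q‖ < 1) (n m : ℕ) :
    qc q (n + 1 + m + 1) (n + 1) = qc q (n + 1 + m) (n + 1) + q ^ (n + 1 + m) * qc q (n + 1 + m) n := by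
  have e1 : n + 1 + m + 1 - (n + 1) = m + 1 := by omega
  have e2 : n + 1 + m - (n + 1) = m := by omega
  have e3 : n + 1 + m - n = m + 1 := by omega
  rw [qc, qc, qc, e1, e2, e3]
  have hPsucc : qp q q (n + 1 + m + 1) = qp q q (n + 1 + m) * (1 - q * q ^ (n + 1 + m)) :=
    qp_succ q q _
  have hPn : qp q q (n + 1) = qp q q n * (1 - q * q ^ n) := qp_succ q q n
  have hPm : qp q q (m + 1) = qp q q m * (1 - q * q ^ m) := qp_succ q q m
  have htri : q ^ ((n + 1) * (n + 1 - 1) / 2) = q ^ (n * (n - 1) / 2) * q ^ n := by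
    rw [tri_succ, pow_add]
  have h1 := qp_q_ne_zero q hq n
  have h2 := qp_q_ne_zero q hq m
  have h3 := qp_q_ne_zero q hq (n + 1 + m)
  have h4 : (1 - q * q ^ n) ≠ 0 := by
    have := qp_q_ne_zero q hq (n + 1); rw [hPn] at this; exact right_ne_zero_of_mul this
  have h5 : (1 - q * q ^ m) ≠ 0 := by
    have := qp_q_ne_zero q hq (m + 1); rw [hPm] at this; exact right_ne_zero_of_mul this
  rw [hPsucc, hPn, hPm, htri]
  field_simp
  have h4' : 1 - q ^ n * q ≠ 0 := by rwa [mul_comm (q ^ n) q]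
  rw [div_add' _ _ _ h4', mul_div_assoc', div_left_inj' h4']
  ring_nf

lemma qc_diag (q : ℂ) (hq : ‖q‖ < 1) (N : ℕ) :
    qc q (N + 1) (N + 1) = q ^ N * qc q N N := by
  have e1 : N + 1 - (N + 1) = 0 := by omega
  have e2 : N - N = 0 := by omega
  have h0 : qp q q 0 = 1 := Finset.prod_range_zero _
  rw [qc, qc, e1, e2, h0, tri_succ, pow_add]
  rw [mul_one, mul_one, mul_div_assoc, div_self (qp_q_ne_zero q hq (N + 1)),
    mul_div_assoc, div_self (qp_q_ne_zero q hq N)]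
  ring

lemma qbin (q : ℂ) (hq : ‖q‖ < 1) (z : ℂ) (N : ℕ) :
    qp (-z) q N = ∑ n ∈ range (N + 1), qc q N n * z ^ n := by
  induction N with
  | zero => simp [qp, qc_zero q hq 0]
  | succ N ih =>
    rw [qp_succ, ih]
    rw [Finset.sum_range_succ' (fun n => qc q (N + 1) n * z ^ n) (N + 1)]
    rw [Finset.sum_range_succ (fun i => qc q (N + 1) (i + 1) * z ^ (i + 1)) N]
    have hpascal : ∀ i ∈ range N, qc q (N + 1) (i + 1) * z ^ (i + 1)
        = qc q N (i + 1) * z ^ (i + 1) + q ^ N * (qc q N i * z ^ (i + 1)) := by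
      intro i hi
      rw [mem_range] at hi
      obtain ⟨m, hm⟩ : ∃ m, N = i + 1 + m := ⟨N - i - 1, by omega⟩
      subst hm
      rw [qc_pascal q hq i m]
      ring
    rw [Finset.sum_congr rfl hpascal, Finset.sum_add_distrib]
    have lhs_eq : (∑ n ∈ range (N + 1), qc q N n * z ^ n) * (1 - -z * q ^ N)
        = (∑ n ∈ range (N + 1), qc q N n * z ^ n)
          + q ^ N * ∑ n ∈ range (N + 1), qc q N n * z ^ (n + 1) := by
      rw [Finset.sum_mul, Finset.mul_sum, ← Finset.sum_add_distrib]
      apply Finset.sum_congr rfl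
      intro n _
      ring
    rw [lhs_eq]
    rw [Finset.sum_range_succ' (fun n => qc q N n * z ^ n) N]
    rw [Finset.sum_range_succ (fun n => qc q N n * z ^ (n + 1)) N]
    rw [qc_diag q hq N, qc_zero q hq N, qc_zero q hq (N + 1)]
    rw [mul_add, Finset.mul_sum]
    ring


section
variable (q z : ℂ)

/-- The big constant. -/
noncomputable def EE (q : ℂ) : ℝ :=
  Real.exp (‖q‖ * (1 - ‖q‖)⁻¹ + 2 * (‖q‖ * (1 - ‖q‖)⁻¹ * (1 - ‖q‖)⁻¹))

lemma qc_norm_le (hq : ‖q‖ < 1) (N n : ℕ) :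
    ‖qc q N n‖ ≤ EE q * ‖q‖ ^ (n * (n - 1) / 2) := by
  set e := Real.exp (-(‖q‖ * (1 - ‖q‖)⁻¹ * (1 - ‖q‖)⁻¹)) with he
  set A := Real.exp (‖q‖ * (1 - ‖q‖)⁻¹) with hA
  have hc0 : (0:ℝ) < e := Real.exp_pos _
  have h1 := qp_q_norm_ge q hq n
  have h2 := qp_q_norm_ge q hq (N - n)
  have h3 := qp_norm_le q q hq N
  have hp1 : (0:ℝ) < ‖qp q q n‖ := lt_of_lt_of_le hc0 h1
  have hp2 : (0:ℝ) < ‖qp q q (N - n)‖ := lt_of_lt_of_le hc0 h2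
  have hq1 : (0:ℝ) ≤ ‖q‖ ^ (n * (n - 1) / 2) := by positivity
  have hEE : (0:ℝ) < EE q := Real.exp_pos _
  rw [qc, norm_div, norm_mul, norm_mul, norm_pow,
    div_le_iff₀ (mul_pos hp1 hp2)]
  have step1 : ‖q‖ ^ (n * (n - 1) / 2) * ‖qp q q N‖ ≤ ‖q‖ ^ (n * (n - 1) / 2) * A :=
    mul_le_mul_of_nonneg_left h3 hq1
  have step2 : EE q * ‖q‖ ^ (n * (n - 1) / 2) * (e * e)
      ≤ EE q * ‖q‖ ^ (n * (n - 1) / 2) * (‖qp q q n‖ * ‖qp q q (N - n)‖) :=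
    mul_le_mul_of_nonneg_left (mul_le_mul h1 h2 hc0.le (norm_nonneg _)) (by positivity)
  have heq : ‖q‖ ^ (n * (n - 1) / 2) * A = EE q * ‖q‖ ^ (n * (n - 1) / 2) * (e * e) := by
    rw [he, hA, EE, Real.exp_neg, two_mul, Real.exp_add, Real.exp_add]
    field_simp
  linarith

lemma tri_succ' (n : ℕ) : (n + 1) * (n + 1 - 1) / 2 = n * (n - 1) / 2 + n := by
  rcases n with _ | m
  · simp
  · simp only [Nat.add_sub_cancel]
    have : (m + 1 + 1) * (m + 1) = (m + 1) * m + 2 * (m + 1) := by ring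
    omega

lemma bnd_summable (hq : ‖q‖ < 1) :
    Summable (fun n : ℕ => ‖q‖ ^ (n * (n - 1) / 2) * ‖z‖ ^ n) := by
  apply summable_of_ratio_norm_eventually_le (r := 1/2) (by norm_num)
  have htend : Tendsto (fun n : ℕ => ‖q‖ ^ n * ‖z‖) atTop (𝓝 0) := by
    simpa using (tendsto_pow_atTop_nhds_zero_of_norm_lt_one (x := ‖q‖)
      (by simpa using hq)).mul_const ‖z‖
  filter_upwards [htend.eventually_le_const (by norm_num : (0:ℝ) < 1/2)] with n hn
  have hnn : (0:ℝ) ≤ ‖q‖ ^ (n * (n - 1) / 2) * ‖z‖ ^ n := by positivity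
  rw [Real.norm_of_nonneg (by positivity), Real.norm_of_nonneg hnn]
  calc ‖q‖ ^ ((n + 1) * (n + 1 - 1) / 2) * ‖z‖ ^ (n + 1)
      = (‖q‖ ^ n * ‖z‖) * (‖q‖ ^ (n * (n - 1) / 2) * ‖z‖ ^ n) := by
        rw [tri_succ', pow_add, pow_succ]; ring
    _ ≤ (1/2) * (‖q‖ ^ (n * (n - 1) / 2) * ‖z‖ ^ n) :=
        mul_le_mul_of_nonneg_right hn hnn

end


section
variable (q z : ℂ)

lemma qc_tail (hq : ‖q‖ < 1) {N n : ℕ} (hn : n ≤ N) :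
    qc q N n = q ^ (n * (n - 1) / 2) / qp q q n
      * ∏ j ∈ range n, (1 - q * q ^ (N - n + j)) := by
  have hsplit : qp q q N = qp q q (N - n) * ∏ j ∈ range n, (1 - q * q ^ (N - n + j)) := by
    conv_lhs => rw [show N = (N - n) + n by omega]
    exact Finset.prod_range_add (fun k => 1 - q * q ^ k) (N - n) n
  rw [qc, hsplit]
  have h1 := qp_q_ne_zero q hq n
  have h2 := qp_q_ne_zero q hq (N - n)
  field_simp

lemma g_tendsto (hq : ‖q‖ < 1) (n : ℕ) :
    Tendsto (fun N => if n ≤ N then qc q N n * z ^ n else 0) atTop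
      (𝓝 (q ^ (n * (n - 1) / 2) * z ^ n / qp q q n)) := by
  have hR : Tendsto (fun N => ∏ j ∈ range n, (1 - q * q ^ (N - n + j))) atTop (𝓝 1) := by
    have h1 : Tendsto (fun N => ∏ j ∈ range n, (1 - q * q ^ (N - n + j))) atTop
        (𝓝 (∏ _j ∈ range n, (1 : ℂ))) := by
      refine tendsto_finset_prod (f := fun j N => 1 - q * q ^ (N - n + j))
        (a := fun _ => (1:ℂ)) (range n) fun j _ => ?_
      have hcomp : Tendsto (fun N : ℕ => N - n + j) atTop atTop :=
        tendsto_atTop_mono (fun N => Nat.le_add_right (N - n) j) (tendsto_sub_atTop_nat n)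
      have hp : Tendsto (fun N : ℕ => q ^ (N - n + j)) atTop (𝓝 0) :=
        (tendsto_pow_atTop_nhds_zero_of_norm_lt_one hq).comp hcomp
      have h2 : Tendsto (fun N : ℕ => 1 - q * q ^ (N - n + j)) atTop (𝓝 (1 - q * 0)) :=
        tendsto_const_nhds.sub (tendsto_const_nhds.mul hp)
      simpa using h2
    simpa using h1
  have key : Tendsto (fun N => (q ^ (n * (n - 1) / 2) * z ^ n / qp q q n)
      * ∏ j ∈ range n, (1 - q * q ^ (N - n + j))) atTop
      (𝓝 (q ^ (n * (n - 1) / 2) * z ^ n / qp q q n)) := by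
    simpa using tendsto_const_nhds.mul hR
  apply key.congr'
  filter_upwards [eventually_ge_atTop n] with N hN
  rw [if_pos hN, qc_tail q hq hN]
  ring

lemma g_hasSum (hq : ‖q‖ < 1) (N : ℕ) :
    HasSum (fun n => if n ≤ N then qc q N n * z ^ n else 0) (qp (-z) q N) := by
  have h0 : ∀ n ∉ range (N + 1), (if n ≤ N then qc q N n * z ^ n else 0) = 0 := by
    intro n hn
    rw [mem_range, not_lt] at hn
    rw [if_neg (by omega)]
  have : HasSum (fun n => if n ≤ N then qc q N n * z ^ n else 0)
      (∑ n ∈ range (N + 1), (if n ≤ N then qc q N n * z ^ n else 0)) :=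
    hasSum_sum_of_ne_finset_zero h0
  have heq : ∑ n ∈ range (N + 1), (if n ≤ N then qc q N n * z ^ n else 0)
      = ∑ n ∈ range (N + 1), qc q N n * z ^ n := by
    apply Finset.sum_congr rfl
    intro n hn
    rw [mem_range] at hn
    rw [if_pos (by omega)]
  rw [heq, ← qbin q hq z N] at this
  exact this

end

/-- Euler's second identity. -/
theorem euler_second_identity (q : ℂ) (hq : ‖q‖ < 1) (z : ℂ) :
    HasSum (fun n : ℕ => q ^ (n * (n - 1) / 2) * z ^ n / qp q q n) (qpInf (-z) q) := by
  have hq' : ‖q‖ < 1 := by exact hq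
  set f : ℕ → ℂ := fun n => q ^ (n * (n - 1) / 2) * z ^ n / qp q q n with hf
  set g : ℕ → ℕ → ℂ := fun N n => if n ≤ N then qc q N n * z ^ n else 0 with hg
  have hbsum : Summable (fun n : ℕ => EE q * (‖q‖ ^ (n * (n - 1) / 2) * ‖z‖ ^ n)) :=
    (bnd_summable q z hq').mul_left (EE q)
  have hpoint : ∀ n, Tendsto (fun N => g N n) atTop (𝓝 (f n)) := fun n => g_tendsto q z hq' n
  have hbound : ∀ N n, ‖g N n‖ ≤ EE q * (‖q‖ ^ (n * (n - 1) / 2) * ‖z‖ ^ n) := by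
    intro N n
    by_cases h : n ≤ N
    · show ‖if n ≤ N then qc q N n * z ^ n else 0‖ ≤ _
      rw [if_pos h, norm_mul, norm_pow, ← mul_assoc]
      exact mul_le_mul_of_nonneg_right (qc_norm_le q hq' N n) (by positivity)
    · show ‖if n ≤ N then qc q N n * z ^ n else 0‖ ≤ _
      rw [if_neg h, norm_zero]
      unfold EE
      positivity
  -- Tannery
  have hTan : Tendsto (fun N => ∑' n, g N n) atTop (𝓝 (∑' n, f n)) :=
    tendsto_tsum_of_dominated_convergence hbsum hpoint (Eventually.of_forall hbound)
  have hTan' : Tendsto (fun N => qp (-z) q N) atTop (𝓝 (∑' n, f n)) := by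
    apply hTan.congr
    intro N
    exact (g_hasSum q z hq' N).tsum_eq
  -- summability of f
  have hfb : ∀ n, ‖f n‖ ≤ EE q * (‖q‖ ^ (n * (n - 1) / 2) * ‖z‖ ^ n) := fun n =>
    le_of_tendsto (tendsto_norm.comp (hpoint n)) (Eventually.of_forall fun N => hbound N n)
  have hSf : Summable f := hbsum.of_norm_bounded hfb
  -- the infinite product
  have hProd : Tendsto (fun N => qp (-z) q N) atTop (𝓝 (qpInf (-z) q)) := by
    by_cases hz : ∀ k, (1 - -z * q ^ k) ≠ 0
    · -- multipliable case
      have hsl : Summable (fun k => Complex.log (1 - -z * q ^ k)) := by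
        have htend : Tendsto (fun k : ℕ => ‖z‖ * ‖q‖ ^ k) atTop (𝓝 0) := by
          simpa using (tendsto_pow_atTop_nhds_zero_of_norm_lt_one
            (x := ‖q‖) (by simpa using hq')).const_mul ‖z‖
        obtain ⟨K, hK⟩ := (htend.eventually_le_const
          (by norm_num : (0:ℝ) < 1/2)).exists_forall_of_atTop
        rw [← summable_nat_add_iff K]
        apply Summable.of_norm_bounded (g := fun n => 3/2 * ‖z‖ * ‖q‖ ^ K * ‖q‖ ^ n)
        · exact (summable_geometric_of_lt_one (norm_nonneg q) hq').mul_left _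
        · intro n
          have h1 : ‖z * q ^ (n + K)‖ ≤ 1/2 := by
            rw [norm_mul, norm_pow]; exact hK (n + K) (by omega)
          have he : (1 : ℂ) - -z * q ^ (n + K) = 1 + z * q ^ (n + K) := by ring
          rw [he]
          calc ‖Complex.log (1 + z * q ^ (n + K))‖
              ≤ 3/2 * ‖z * q ^ (n + K)‖ := Complex.norm_log_one_add_half_le_self h1
            _ = 3/2 * ‖z‖ * ‖q‖ ^ K * ‖q‖ ^ n := by
                rw [norm_mul, norm_pow, pow_add]; ring
      have hm : Multipliable (fun k => 1 - -z * q ^ k) :=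
        Complex.multipliable_of_summable_log hsl
      exact hm.hasProd.tendsto_prod_nat
    · -- some factor vanishes
      push_neg at hz
      obtain ⟨k0, hk0⟩ := hz
      have hP0 : HasProd (fun k => 1 - -z * q ^ k) 0 := by
        show Tendsto (fun s : Finset ℕ => ∏ i ∈ s, (1 - -z * q ^ i)) atTop (𝓝 0)
        have hconst : Tendsto (fun _ : Finset ℕ => (0:ℂ)) atTop (𝓝 0) := tendsto_const_nhds
        apply hconst.congr'
        filter_upwards [eventually_ge_atTop ({k0} : Finset ℕ)] with s hs
        exact (Finset.prod_eq_zero (hs (Finset.mem_singleton_self k0)) hk0).symm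
      have hqpInf : qpInf (-z) q = 0 := hP0.tprod_eq
      rw [hqpInf]
      have hconst : Tendsto (fun _ : ℕ => (0:ℂ)) atTop (𝓝 0) := tendsto_const_nhds
      apply hconst.congr'
      filter_upwards [eventually_ge_atTop (k0 + 1)] with N hN
      rw [qp]
      exact (Finset.prod_eq_zero (Finset.mem_range.2 (by omega)) hk0).symm
  have hfin : ∑' n, f n = qpInf (-z) q := tendsto_nhds_unique hTan' hProd
  rw [← hfin]
  exact hSf.hasSum
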